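/- With Θ, θ̂, f, and h as in the previous context (f continuous, f(θ̂)=0, f > 0 off θ̂, strictly increasing along each ray from θ̂ within Θ, and f(θ) → ∞ at the boundary of Θ, with Θ bounded and star-shaped about θ̂), the map h(θ) = θ̂ + (1 + f(θ)/(2N))(θ − θ̂) is a bijection from Θ onto ℝ^d. -/

import Mathlib

open Filter

theorem composite_similarity_bijective
    (d : ℕ) (Θ : Set (EuclideanSpace ℝ (Fin d))) (θhat : EuclideanSpace ℝ (Fin d))
    (f : EuclideanSpace ℝ (Fin d) → ℝ) (N : ℝ) (hN : 0 < N)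
    (hopen : IsOpen Θ) (hbdd : Bornology.IsBounded Θ) (hmem : θhat ∈ Θ)
    (hstar : StarConvex ℝ θhat Θ)
    (hfcont : ContinuousOn f Θ)
    (hf0 : f θhat = 0) (hfpos : ∀ θ ∈ Θ, θ ≠ θhat → 0 < f θ)
    (hray : ∀ u : EuclideanSpace ℝ (Fin d), ‖u‖ = 1 →
      StrictMonoOn (fun t : ℝ => f (θhat + t • u)) {t : ℝ | 0 ≤ t ∧ θhat + t • u ∈ Θ})
    (hblowup : ∀ θb ∈ frontier Θ, Tendsto f (nhdsWithin θb Θ) atTop)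
    (h : EuclideanSpace ℝ (Fin d) → EuclideanSpace ℝ (Fin d))
    (hdef : ∀ θ, h θ = θhat + (1 + f θ / (2 * N)) • (θ - θhat)) :
    Set.BijOn h Θ Set.univ := by
  have h2N : (0:ℝ) < 2 * N := by linarith
  have hfnn : ∀ θ ∈ Θ, 0 ≤ f θ := by
    intro θ hθ
    rcases eq_or_ne θ θhat with rfl | hne
    · simp [hf0]
    · exact (hfpos θ hθ hne).le
  have hcpos : ∀ θ ∈ Θ, (0:ℝ) < 1 + f θ / (2 * N) := by
    intro θ hθ
    have := div_nonneg (hfnn θ hθ) h2N.le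
    linarith
  -- strict monotonicity of φ along each ray
  have hphi_mono : ∀ u : EuclideanSpace ℝ (Fin d), ‖u‖ = 1 →
      StrictMonoOn (fun t : ℝ => t * (1 + f (θhat + t • u) / (2 * N)))
        {t : ℝ | 0 ≤ t ∧ θhat + t • u ∈ Θ} := by
    intro u hu t₁ ht₁ t₂ ht₂ hlt
    have hf12 : f (θhat + t₁ • u) < f (θhat + t₂ • u) := hray u hu ht₁ ht₂ hlt
    have hd12 : f (θhat + t₁ • u) / (2*N) < f (θhat + t₂ • u) / (2*N) :=
      div_lt_div_of_pos_right hf12 h2N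
    have hc1 := hcpos _ ht₁.2
    have hc2 := hcpos _ ht₂.2
    have ht1nn : 0 ≤ t₁ := ht₁.1
    calc t₁ * (1 + f (θhat + t₁ • u) / (2*N))
        ≤ t₁ * (1 + f (θhat + t₂ • u) / (2*N)) := by nlinarith
      _ < t₂ * (1 + f (θhat + t₂ • u) / (2*N)) := by nlinarith
  -- the ray sets are "initial segments"
  have hseg : ∀ u : EuclideanSpace ℝ (Fin d), ∀ t' ∈ {t : ℝ | 0 ≤ t ∧ θhat + t • u ∈ Θ},
      ∀ t, 0 ≤ t → t ≤ t' → t ∈ {t : ℝ | 0 ≤ t ∧ θhat + t • u ∈ Θ} := by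
    intro u t' ht' t htnn htle
    refine ⟨htnn, ?_⟩
    rcases eq_or_lt_of_le (le_trans htnn htle) with h0 | ht'pos
    · have : t = 0 := le_antisymm (h0 ▸ htle) htnn
      simpa [this] using hmem
    · have hb0 : 0 ≤ t / t' := div_nonneg htnn ht'pos.le
      have hb1 : t / t' ≤ 1 := (div_le_one ht'pos).mpr htle
      have := hstar ht'.2 (by linarith : (0:ℝ) ≤ 1 - t/t') hb0 (by ring)
      have hrw : (1 - t/t') • θhat + (t/t') • (θhat + t' • u) = θhat + t • u := by
        rw [smul_add, ← add_assoc, ← add_smul, smul_smul]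
        have h1 : (1 - t/t') + t/t' = 1 := by ring
        rw [h1, one_smul, div_mul_cancel₀ _ (ne_of_gt ht'pos)]
      rwa [hrw] at this
  have hmapsto : Set.MapsTo h Θ Set.univ := fun _ _ => Set.mem_univ _
  -- injectivity
  have hinj : Set.InjOn h Θ := by
    intro θ₁ hθ₁ θ₂ hθ₂ heq
    rw [hdef, hdef] at heq
    have heq' : (1 + f θ₁/(2*N)) • (θ₁ - θhat) = (1 + f θ₂/(2*N)) • (θ₂ - θhat) :=
      add_left_cancel heq
    have hc1 := hcpos _ hθ₁
    have hc2 := hcpos _ hθ₂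
    by_cases h1e : θ₁ = θhat
    · subst h1e
      have : (1 + f θ₂/(2*N)) • (θ₂ - θ₁) = 0 := by simpa using heq'.symm
      rcases smul_eq_zero.mp this with hc | hv
      · exact absurd hc (ne_of_gt hc2)
      · exact (sub_eq_zero.mp hv).symm
    by_cases h2e : θ₂ = θhat
    · subst h2e
      have : (1 + f θ₁/(2*N)) • (θ₁ - θ₂) = 0 := by simpa using heq'
      rcases smul_eq_zero.mp this with hc | hv
      · exact absurd hc (ne_of_gt hc1)
      · exact sub_eq_zero.mp hv
    -- generic case: both off θhat, same ray
    set t₁ : ℝ := ‖θ₁ - θhat‖ with ht₁def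
    have ht₁pos : 0 < t₁ := norm_pos_iff.mpr (sub_ne_zero.mpr h1e)
    set u : EuclideanSpace ℝ (Fin d) := t₁⁻¹ • (θ₁ - θhat) with hudef
    have hu : ‖u‖ = 1 := by
      rw [hudef, norm_smul, norm_inv, Real.norm_eq_abs, abs_of_pos ht₁pos,
        inv_mul_cancel₀ (ne_of_gt ht₁pos)]
    have hθ₁eq : θhat + t₁ • u = θ₁ := by
      rw [hudef, smul_smul, mul_inv_cancel₀ (ne_of_gt ht₁pos), one_smul]
      abel
    set t₂ : ℝ := (1 + f θ₁/(2*N)) * t₁ / (1 + f θ₂/(2*N)) with ht₂def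
    have ht₂pos : 0 < t₂ := div_pos (mul_pos hc1 ht₁pos) hc2
    have hθ₂eq : θhat + t₂ • u = θ₂ := by
      have hv2 : θ₂ - θhat = (1 + f θ₂/(2*N))⁻¹ • ((1 + f θ₁/(2*N)) • (θ₁ - θhat)) := by
        rw [heq', inv_smul_smul₀ (ne_of_gt hc2)]
      have : t₂ • u = θ₂ - θhat := by
        rw [hv2, hudef, smul_smul, smul_smul]
        congr 1
        rw [ht₂def, div_mul_eq_mul_div, mul_assoc, mul_inv_cancel₀ (ne_of_gt ht₁pos),
          mul_one, div_eq_inv_mul]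
      rw [this]; abel
    have hmem₁ : t₁ ∈ {t : ℝ | 0 ≤ t ∧ θhat + t • u ∈ Θ} := ⟨ht₁pos.le, hθ₁eq ▸ hθ₁⟩
    have hmem₂ : t₂ ∈ {t : ℝ | 0 ≤ t ∧ θhat + t • u ∈ Θ} := ⟨ht₂pos.le, hθ₂eq ▸ hθ₂⟩
    have hφeq : t₁ * (1 + f (θhat + t₁ • u) / (2*N)) = t₂ * (1 + f (θhat + t₂ • u) / (2*N)) := by
      rw [hθ₁eq, hθ₂eq, ht₂def, div_mul_cancel₀ _ (ne_of_gt hc2)]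
      ring
    have : t₁ = t₂ := (hphi_mono u hu).injOn hmem₁ hmem₂ hφeq
    rw [← hθ₁eq, ← hθ₂eq, this]
  -- surjectivity
  have hsurj : Set.SurjOn h Θ Set.univ := by
    intro y _
    by_cases hy : y = θhat
    · refine ⟨θhat, hmem, ?_⟩
      rw [hdef]; simp [hf0, hy]
    set s : ℝ := ‖y - θhat‖ with hsdef
    have hs : 0 < s := norm_pos_iff.mpr (sub_ne_zero.mpr hy)
    set u : EuclideanSpace ℝ (Fin d) := s⁻¹ • (y - θhat) with hudef
    have hu : ‖u‖ = 1 := by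
      rw [hudef, norm_smul, norm_inv, Real.norm_eq_abs, abs_of_pos hs,
        inv_mul_cancel₀ (ne_of_gt hs)]
    set S : Set ℝ := {t : ℝ | 0 ≤ t ∧ θhat + t • u ∈ Θ} with hSdef
    have h0S : (0:ℝ) ∈ S := ⟨le_refl 0, by simpa using hmem⟩
    have hSne : S.Nonempty := ⟨0, h0S⟩
    obtain ⟨R, hR⟩ := hbdd.subset_closedBall θhat
    have hSbdd : BddAbove S := by
      refine ⟨R, fun t ht => ?_⟩
      have := hR ht.2
      rw [Metric.mem_closedBall, dist_eq_norm] at this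
      have : ‖t • u‖ ≤ R := by
        rw [← add_sub_cancel_left θhat (t • u)]; exact this
      rwa [norm_smul, hu, mul_one, Real.norm_eq_abs, abs_of_nonneg ht.1] at this
    set T : ℝ := sSup S with hTdef
    have hTpos : 0 < T := by
      obtain ⟨ε, hε, hball⟩ := Metric.isOpen_iff.mp hopen θhat hmem
      have hmemS : ε/2 ∈ S := by
        refine ⟨by linarith, hball ?_⟩
        rw [Metric.mem_ball, dist_eq_norm]
        have : θhat + (ε/2) • u - θhat = (ε/2) • u := by abel
        rw [this, norm_smul, hu, mul_one, Real.norm_eq_abs, abs_of_pos (by linarith)]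
        linarith
      have := le_csSup hSbdd hmemS
      linarith
    have hIcoS : Set.Ico 0 T ⊆ S := by
      intro t ⟨htnn, htlt⟩
      obtain ⟨t', ht'S, htt'⟩ := exists_lt_of_lt_csSup hSne htlt
      exact hseg u t' ht'S t htnn htt'.le
    have hTnot : T ∉ S := by
      intro hTS
      obtain ⟨ε, hε, hball⟩ := Metric.isOpen_iff.mp hopen _ hTS.2
      have hmemS : T + ε/2 ∈ S := by
        refine ⟨by linarith [hTS.1], hball ?_⟩
        rw [Metric.mem_ball, dist_eq_norm]
        have : θhat + (T + ε/2) • u - (θhat + T • u) = (ε/2) • u := by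
          rw [add_smul]; abel
        rw [this, norm_smul, hu, mul_one, Real.norm_eq_abs, abs_of_pos (by linarith)]
        linarith
      have := le_csSup hSbdd hmemS
      linarith
    set θb : EuclideanSpace ℝ (Fin d) := θhat + T • u with hθbdef
    set path : ℝ → EuclideanSpace ℝ (Fin d) := fun t => θhat + t • u with hpathdef
    have hpathcont : Continuous path :=
      continuous_const.add (continuous_id.smul continuous_const)
    have htendnhds : Tendsto path (nhdsWithin T (Set.Iio T)) (nhds θb) :=
      (hpathcont.tendsto T).mono_left nhdsWithin_le_nhds
    have hevent : ∀ᶠ t in nhdsWithin T (Set.Iio T), path t ∈ Θ := by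
      have h1 : ∀ᶠ t in nhdsWithin T (Set.Iio T), t ∈ Set.Iio T :=
        eventually_mem_nhdsWithin
      have h2 : ∀ᶠ t in nhdsWithin T (Set.Iio T), 0 < t :=
        eventually_nhdsWithin_of_eventually_nhds (eventually_gt_nhds hTpos)
      filter_upwards [h1, h2] with t ht1 ht2
      exact (hIcoS ⟨ht2.le, ht1⟩).2
    have hθbcl : θb ∈ closure Θ :=
      mem_closure_of_tendsto htendnhds hevent
    have hθbfr : θb ∈ frontier Θ := by
      rw [hopen.frontier_eq]
      exact ⟨hθbcl, fun hmemΘ => hTnot ⟨hTpos.le, hmemΘ⟩⟩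
    have htendΘ : Tendsto path (nhdsWithin T (Set.Iio T)) (nhdsWithin θb Θ) :=
      tendsto_nhdsWithin_iff.mpr ⟨htendnhds, hevent⟩
    have hftend : Tendsto (fun t => f (path t)) (nhdsWithin T (Set.Iio T)) atTop :=
      (hblowup θb hθbfr).comp htendΘ
    have hctend : Tendsto (fun t => 1 + f (path t) / (2*N)) (nhdsWithin T (Set.Iio T)) atTop :=
      tendsto_atTop_add_const_left _ 1 (hftend.atTop_div_const h2N)
    have hidtend : Tendsto (fun t : ℝ => t) (nhdsWithin T (Set.Iio T)) (nhds T) :=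
      tendsto_id.mono_left nhdsWithin_le_nhds
    have hφtend : Tendsto (fun t => t * (1 + f (path t) / (2*N)))
        (nhdsWithin T (Set.Iio T)) atTop := Tendsto.pos_mul_atTop hTpos hidtend hctend
    -- pick t₀ with φ t₀ > s
    have hexists : ∃ t₀, (0 < t₀ ∧ t₀ < T) ∧ s < t₀ * (1 + f (path t₀) / (2*N)) := by
      have h1 : ∀ᶠ t in nhdsWithin T (Set.Iio T), s < t * (1 + f (path t) / (2*N)) :=
        hφtend.eventually_gt_atTop s
      have h2 : ∀ᶠ t in nhdsWithin T (Set.Iio T), t ∈ Set.Iio T :=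
        eventually_mem_nhdsWithin
      have h3 : ∀ᶠ t in nhdsWithin T (Set.Iio T), 0 < t :=
        eventually_nhdsWithin_of_eventually_nhds (eventually_gt_nhds hTpos)
      obtain ⟨t₀, h1', h2', h3'⟩ := (h1.and (h2.and h3)).exists
      exact ⟨t₀, ⟨h3', h2'⟩, h1'⟩
    obtain ⟨t₀, ⟨ht₀pos, ht₀T⟩, ht₀s⟩ := hexists
    -- IVT on [0, t₀]
    have hsubset : Set.Icc (0:ℝ) t₀ ⊆ S := by
      intro t ⟨h1, h2⟩
      exact hIcoS ⟨h1, lt_of_le_of_lt h2 ht₀T⟩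
    have hcont : ContinuousOn (fun t => t * (1 + f (path t) / (2*N))) (Set.Icc 0 t₀) := by
      apply ContinuousOn.mul continuousOn_id
      apply ContinuousOn.add continuousOn_const
      apply ContinuousOn.div_const
      exact hfcont.comp hpathcont.continuousOn (fun t ht => (hsubset ht).2)
    have hivt := intermediate_value_Icc ht₀pos.le hcont
    have hsmem : s ∈ Set.Icc ((fun t => t * (1 + f (path t) / (2*N))) 0)
        ((fun t => t * (1 + f (path t) / (2*N))) t₀) := by
      constructor
      · simpa using hs.le
      · simpa using ht₀s.le
    obtain ⟨t', ht'mem, ht'eq⟩ := hivt hsmem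
    refine ⟨path t', (hsubset ht'mem).2, ?_⟩
    rw [hdef]
    have harg : path t' - θhat = t' • u := by
      show θhat + t' • u - θhat = t' • u
      rw [add_sub_cancel_left]
    rw [harg, smul_smul]
    have : (1 + f (path t') / (2 * N)) * t' = s := by
      rw [mul_comm]; exact ht'eq
    rw [this, hudef, smul_smul, mul_inv_cancel₀ (ne_of_gt hs), one_smul]
    abel
  exact ⟨hmapsto, hinj, hsurj⟩
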